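/- Let p, q ≥ 1 with p + q even, let γ_{p,q} ∈ S_{p+q} be the product of the two cycles (1 2 … p)(p+1 p+2 … p+q), and let α be a pair partition of {1,…,p+q} that is connected relative to γ_{p,q}. Then the number of cycles of the product P_α·γ_{p,q} satisfies #(P_α·γ_{p,q}) = (p+q)/2 − 2g for some integer g ≥ 0; in particular #(P_α·γ_{p,q}) ≤ (p+q)/2. -/

import Mathlib

set_option linter.unusedSectionVars false
set_option linter.deprecated false

open Finset Equiv

namespace LRH

variable {n m : ℕ}

/-- The ε-matrix determined by the interaction sets `K`. -/
def eps (K : Fin m → Finset (Fin n)) (i j : Fin m) : ℕ :=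
  if K i ∩ K j = ∅ then 1 else 0

section Partitions

variable {β : Type*} [LinearOrder β]

/-- A partition (equivalence relation) is (ε,ι)-noncrossing. -/
def EpsNC (K : Fin m → Finset (Fin n)) (ι : β → Fin m) (α : Setoid β) : Prop :=
  ∀ i p j q : β, i < p → p < j → j < q →
    α.r i j → α.r p q → ¬ α.r i p → eps K (ι i) (ι p) = 1

/-- Noncrossing partition of a linearly ordered set. -/
def IsNoncrossing (α : Setoid β) : Prop :=
  ∀ i p j q : β, i < p → p < j → j < q →
    α.r i j → α.r p q → ¬ α.r i p → False

/-- Pair partition: every class has exactly two elements. -/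
def IsPairPartition (α : Setoid β) : Prop :=
  ∀ i : β, {j | α.r i j}.ncard = 2

/-- The set `NC^{(ε,ι)}`. -/
def NCSet (K : Fin m → Finset (Fin n)) (ι : β → Fin m) : Set (Setoid β) :=
  {α | α ≤ Setoid.ker ι ∧ EpsNC K ι α}

/-- The set `NC₂^{(ε,ι)}` of (ε,ι)-noncrossing pair partitions. -/
def NC2Set (K : Fin m → Finset (Fin n)) (ι : β → Fin m) : Set (Setoid β) :=
  {α | IsPairPartition α ∧ α ≤ Setoid.ker ι ∧ EpsNC K ι α}

/-- Restriction of a partition to a subset (as a partition of the subtype). -/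
def restrictSetoid (α : Setoid β) (p : β → Prop) : Setoid {x // p x} :=
  Setoid.comap Subtype.val α

end Partitions

section Perms

variable {β : Type*} [LinearOrder β] [Fintype β]

/-- The full cycle on a finite subset `J`, in increasing order, fixing the complement. -/
def fullCycleOn (J : Finset β) : Equiv.Perm β :=
  (J.sort (· ≤ ·)).formPerm

/-- Number of cycles of a permutation, counting fixed points. -/
def numCycles (σ : Equiv.Perm β) : ℕ :=
  σ.cycleType.card + (Fintype.card β - σ.support.card)

/-- `|σ|`, the minimal number of transpositions needed to write σ; equals
`card − numCycles`. -/
def permNorm (σ : Equiv.Perm β) : ℕ :=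
  σ.support.card - σ.cycleType.card

/-- The permutation induced on `J` (extended by the identity off `J`), when `σ`
preserves `J`; junk value `1` otherwise. -/
def permRestrict (σ : Equiv.Perm β) (J : Finset β) : Equiv.Perm β :=
  if h : ∀ x : β, x ∈ J ↔ σ x ∈ J then Equiv.Perm.ofSubtype (σ.subtypePerm fun x => (h x).symm) else 1

/-- `σ` restricted to `J` is noncrossing, i.e. lies on the geodesic `1 - σ_J - γ_J`. -/
def NCOn (σ : Equiv.Perm β) (J : Finset β) : Prop :=
  permNorm (permRestrict σ J) + permNorm ((permRestrict σ J)⁻¹ * fullCycleOn J) = J.card - 1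

/-- `σ_J` and `τ_J` lie on a common geodesic `1 - σ_J - τ_J - γ_J`. -/
def geodesic3 (σ τ : Equiv.Perm β) (J : Finset β) : Prop :=
  permNorm (permRestrict σ J) + permNorm ((permRestrict σ J)⁻¹ * permRestrict τ J)
    + permNorm ((permRestrict τ J)⁻¹ * fullCycleOn J) = J.card - 1

end Perms

variable {k : ℕ}

/-- `J_s = {j : s ∈ K_{ι_j}}`. -/
def Jset (K : Fin m → Finset (Fin n)) (ι : Fin k → Fin m) (s : Fin n) : Finset (Fin k) :=
  Finset.univ.filter (fun j => s ∈ K (ι j))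

/-- The set `S_NC^{(ε,ι)}(γ_k)` of (ε,ι)-noncrossing permutations. -/
def SNCSet (K : Fin m → Finset (Fin n)) (ι : Fin k → Fin m) : Set (Equiv.Perm (Fin k)) :=
  {σ | (∀ j, ι (σ j) = ι j) ∧ ∀ s : Fin n, NCOn σ (Jset K ι s)}

/-- The relation `σ ≤ τ` on `S_NC^{(ε,ι)}(γ_k)`. -/
def geoLe (K : Fin m → Finset (Fin n)) (ι : Fin k → Fin m) (σ τ : Equiv.Perm (Fin k)) : Prop :=
  ∀ s : Fin n, geodesic3 σ τ (Jset K ι s)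

/-- The interaction sets of the XY-model: `K ι = {ι, ι+1}`. -/
def KXY (n : ℕ) : Fin (n - 1) → Finset (Fin n) := fun i =>
  {⟨i.val, Nat.lt_of_lt_of_le i.isLt (Nat.sub_le n 1)⟩,
   ⟨i.val + 1, by have := i.isLt; omega⟩}

section PMap

variable {β : Type*} [LinearOrder β] [Fintype β]

/-- The equivalence class of `i` as a finset. -/
noncomputable def classFinset (α : Setoid β) (i : β) : Finset β :=
  letI := Classical.decPred (α.r i)
  Finset.univ.filter (α.r i)

lemma mem_classFinset {α : Setoid β} {i j : β} : j ∈ classFinset α i ↔ α.r i j := by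
  classical
  simp [classFinset]

lemma self_mem_classFinset (α : Setoid β) (i : β) : i ∈ classFinset α i :=
  mem_classFinset.mpr (α.refl i)

lemma classFinset_eq_of_rel {α : Setoid β} {i j : β} (h : α.r i j) :
    classFinset α i = classFinset α j := by
  ext x
  simp only [mem_classFinset]
  exact ⟨fun hx => α.trans (α.symm h) hx, fun hx => α.trans h hx⟩

/-- The map `P` from partitions to permutations: each class, listed increasingly,
becomes a cycle. -/
noncomputable def partitionToPerm (α : Setoid β) : Equiv.Perm β :=
  Equiv.ofBijective (fun i => ((classFinset α i).sort (· ≤ ·)).formPerm i) (by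
    rw [← Finite.injective_iff_bijective]
    intro a b hab
    dsimp only at hab
    have ha : ((classFinset α a).sort (· ≤ ·)).formPerm a ∈ (classFinset α a).sort (· ≤ ·) :=
      List.formPerm_apply_mem_of_mem ((Finset.mem_sort _).mpr (self_mem_classFinset α a))
    have hb : ((classFinset α b).sort (· ≤ ·)).formPerm b ∈ (classFinset α b).sort (· ≤ ·) :=
      List.formPerm_apply_mem_of_mem ((Finset.mem_sort _).mpr (self_mem_classFinset α b))
    have ha' : α.r a (((classFinset α a).sort (· ≤ ·)).formPerm a) :=
      mem_classFinset.mp ((Finset.mem_sort _).mp ha)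
    have hb' : α.r b (((classFinset α b).sort (· ≤ ·)).formPerm b) :=
      mem_classFinset.mp ((Finset.mem_sort _).mp hb)
    have hrel : α.r a b := by
      refine α.iseqv.trans ha' ?_
      rw [hab]
      exact α.iseqv.symm hb'
    have hcc : classFinset α a = classFinset α b := classFinset_eq_of_rel hrel
    rw [hcc] at hab
    exact ((classFinset α b).sort (· ≤ ·)).formPerm.injective hab)

end PMap

instance setoidFinite {X : Type*} [Finite X] : Finite (Setoid X) :=
  Finite.of_injective (fun s : Setoid X => s.r) fun a b h => by
    cases a; cases b; dsimp at h; subst h; rfl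

section Mobius

/-- The Möbius function of a finite poset, determined by `μ(x,x) = 1` and
`∑_{x ≤ z ≤ y} μ(z,y) = 0` for `x < y`. -/
noncomputable def mobius {P : Type*} [PartialOrder P] [Fintype P] (a b : P) : ℤ :=
  letI := Classical.dec
  if a = b then 1
  else if a ≤ b then
    - ∑ z ∈ (Finset.univ.filter (fun z => a < z ∧ z ≤ b)).attach,
        mobius (z : P) b
  else 0
termination_by letI := Classical.dec; (Finset.univ.filter (fun z : P => a < z ∧ z ≤ b)).card
decreasing_by
  classical
  have hz := z.2
  simp only [Finset.mem_filter, Finset.mem_univ, true_and] at hz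
  apply Finset.card_lt_card
  rw [Finset.ssubset_iff_of_subset]
  · exact ⟨z, by simp [hz.1, hz.2], by simp⟩
  · intro w hw
    simp only [Finset.mem_filter, Finset.mem_univ, true_and] at hw ⊢
    exact ⟨lt_trans hz.1 hw.1, hw.2⟩

end Mobius

section Restrict

variable {n m k : ℕ}

lemma restrictSetoid_isNoncrossing {K : Fin m → Finset (Fin n)}
    (hK : ∀ i, (K i).Nonempty) {ι : Fin k → Fin m} {α : Setoid (Fin k)}
    (hα : α ∈ NCSet K ι) (v : Fin m) :
    IsNoncrossing (restrictSetoid α (fun j => ι j = v)) := by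
  rintro ⟨i, hi⟩ ⟨p, hp⟩ ⟨j, hj⟩ ⟨q, hq⟩ hip hpj hjq hij hpq hnip
  have h1 : i < p := hip
  have h2 : p < j := hpj
  have h3 : j < q := hjq
  have hij' : α.r i j := hij
  have hpq' : α.r p q := hpq
  have hnip' : ¬ α.r i p := hnip
  have := hα.2 i p j q h1 h2 h3 hij' hpq' hnip'
  rw [hi, hp] at this
  unfold eps at this
  rw [Finset.inter_self] at this
  rcases hK v with ⟨x, hx⟩
  simp only [(Finset.nonempty_iff_ne_empty.mp ⟨x, hx⟩), if_false] at this
  exact absurd this (by simp [Finset.nonempty_iff_ne_empty.mp ⟨x, hx⟩])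

end Restrict

end LRH

namespace LRH

/-- The product of the two full cycles `(1 … p)(p+1 … p+q)`. -/
def gammaPQ (p q : ℕ) : Equiv.Perm (Fin (p + q)) :=
  fullCycleOn (Finset.univ.filter fun i : Fin (p + q) => (i : ℕ) < p) *
    fullCycleOn (Finset.univ.filter fun i : Fin (p + q) => p ≤ (i : ℕ))

end LRH

namespace Stmt5Aux

open Equiv Equiv.Perm LRH

/-! ### Counting lemmas for quotients -/

lemma card_eq_card_add_one {X Y : Type*} [Finite X] (f : X → Y) (hf : Function.Surjective f)
    (u v : X) (huv : u ≠ v) (hfu : f u = f v)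
    (hfib : ∀ x y, f x = f y → x = y ∨ (x = u ∧ y = v) ∨ (x = v ∧ y = u)) :
    Nat.card X = Nat.card Y + 1 := by
  classical
  have hbij : Function.Bijective (fun x : {x : X // ¬ x = v} => f x.1) := by
    constructor
    · rintro ⟨x, hx⟩ ⟨y, hy⟩ h
      rcases hfib x y h with h | ⟨rfl, rfl⟩ | ⟨rfl, rfl⟩
      · exact Subtype.ext h
      · exact absurd rfl hy
      · exact absurd rfl hx
    · intro y
      obtain ⟨x, rfl⟩ := hf y
      by_cases hx : x = v
      · exact ⟨⟨u, fun h => huv h⟩, by show f u = f x; rw [hfu, hx]⟩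
      · exact ⟨⟨x, hx⟩, rfl⟩
  have h1 : Nat.card Y = Nat.card {x : X // ¬ x = v} := (Nat.card_eq_of_bijective _ hbij).symm
  haveI : Fintype X := Fintype.ofFinite X
  have h2 : Fintype.card {x : X // ¬ x = v} + 1 = Fintype.card X := by
    have := Fintype.card_subtype_compl (fun x : X => x = v)
    rw [Fintype.card_subtype_eq] at this
    have hpos : 1 ≤ Fintype.card X := Fintype.card_pos_iff.mpr ⟨v⟩
    omega
  rw [h1, Nat.card_eq_fintype_card, Nat.card_eq_fintype_card, h2]

/-- The canonical surjection between quotients for comparable setoids. -/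
def quotMap {X : Type*} (r s : Setoid X) (h : ∀ x y, r.r x y → s.r x y) :
    Quotient r → Quotient s :=
  fun q => Quotient.liftOn q (fun x => Quotient.mk s x) fun a b hab => Quotient.sound (h a b hab)

lemma quotMap_mk {X : Type*} (r s : Setoid X) (h : ∀ x y, r.r x y → s.r x y) (x : X) :
    quotMap r s h (Quotient.mk r x) = Quotient.mk s x := rfl

lemma quotMap_surjective {X : Type*} (r s : Setoid X) (h : ∀ x y, r.r x y → s.r x y) :
    Function.Surjective (quotMap r s h) := by
  intro q
  induction q using Quotient.ind with
  | _ x => exact ⟨Quotient.mk r x, rfl⟩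

lemma card_quot_le_of_le {X : Type*} [Finite X] {r s : Setoid X}
    (h : ∀ x y, r.r x y → s.r x y) :
    Nat.card (Quotient s) ≤ Nat.card (Quotient r) :=
  Nat.card_le_card_of_surjective _ (quotMap_surjective r s h)

/-! ### Merging two classes of a setoid -/

/-- The relation obtained from `r` by merging the classes of `a` and `b`. -/
def mergeRel {X : Type*} (r : Setoid X) (a b : X) (x y : X) : Prop :=
  r.r x y ∨ (r.r x a ∧ r.r y b) ∨ (r.r x b ∧ r.r y a)

lemma mergeRel_equivalence {X : Type*} (r : Setoid X) (a b : X) (hab : ¬ r.r a b) :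
    Equivalence (mergeRel r a b) := by
  constructor
  · intro x; exact Or.inl (r.refl x)
  · rintro x y (h | ⟨h1, h2⟩ | ⟨h1, h2⟩)
    · exact Or.inl (r.symm h)
    · exact Or.inr (Or.inr ⟨h2, h1⟩)
    · exact Or.inr (Or.inl ⟨h2, h1⟩)
  · rintro x y z (h | ⟨h1, h2⟩ | ⟨h1, h2⟩) (h' | ⟨h1', h2'⟩ | ⟨h1', h2'⟩)
    · exact Or.inl (r.trans h h')
    · exact Or.inr (Or.inl ⟨r.trans h h1', h2'⟩)
    · exact Or.inr (Or.inr ⟨r.trans h h1', h2'⟩)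
    · exact Or.inr (Or.inl ⟨h1, r.trans (r.symm h') h2⟩)
    · exact absurd (r.trans (r.symm h1') h2) hab
    · exact Or.inl (r.trans h1 (r.symm h2'))
    · exact Or.inr (Or.inr ⟨h1, r.trans (r.symm h') h2⟩)
    · exact Or.inl (r.trans h1 (r.symm h2'))
    · exact absurd (r.trans (r.symm h2) h1') hab

/-- The setoid obtained from `r` by merging the classes of `a` and `b`. -/
def mergeSetoid {X : Type*} (r : Setoid X) (a b : X) (hab : ¬ r.r a b) : Setoid X :=
  ⟨mergeRel r a b, mergeRel_equivalence r a b hab⟩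

lemma card_quot_merge {X : Type*} [Finite X] (r : Setoid X) (a b : X) (hab : ¬ r.r a b) :
    Nat.card (Quotient r) = Nat.card (Quotient (mergeSetoid r a b hab)) + 1 := by
  have hle : ∀ x y, r.r x y → (mergeSetoid r a b hab).r x y := fun x y h => Or.inl h
  refine card_eq_card_add_one (quotMap r _ hle) (quotMap_surjective r _ hle)
    (Quotient.mk r a) (Quotient.mk r b) ?_ ?_ ?_
  · intro h
    exact hab (Quotient.exact h)
  · exact Quotient.sound (Or.inr (Or.inl ⟨r.refl a, r.refl b⟩))
  · intro x y
    induction x using Quotient.ind with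
    | _ x =>
    induction y using Quotient.ind with
    | _ y =>
    intro h
    rcases (Quotient.exact h : mergeRel r a b x y) with h | ⟨h1, h2⟩ | ⟨h1, h2⟩
    · exact Or.inl (Quotient.sound h)
    · exact Or.inr (Or.inl ⟨Quotient.sound h1, Quotient.sound h2⟩)
    · exact Or.inr (Or.inr ⟨Quotient.sound h1, Quotient.sound h2⟩)

lemma card_quot_of_rel_eq_merge {X : Type*} [Finite X] (r s : Setoid X) (a b : X)
    (hab : ¬ r.r a b) (h : ∀ x y, s.r x y ↔ mergeRel r a b x y) :
    Nat.card (Quotient r) = Nat.card (Quotient s) + 1 := by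
  have : s = mergeSetoid r a b hab := Setoid.ext fun x y => h x y
  rw [this]
  exact card_quot_merge r a b hab

/-! ### Cycles as a setoid -/

variable {β : Type*} [LinearOrder β] [Fintype β]

/-- The same-cycle setoid of a permutation. -/
def cycleSetoid (g : Perm β) : Setoid β :=
  ⟨g.SameCycle, ⟨fun x => SameCycle.refl g x, fun h => h.symm, fun h h' => h.trans h'⟩⟩

lemma cycleSetoid_rel (g : Perm β) (x y : β) : (cycleSetoid g).r x y ↔ g.SameCycle x y :=
  Iff.rfl

lemma numCycles_eq_card_quot (g : Perm β) :
    numCycles g = Nat.card (Quotient (cycleSetoid g)) := by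
  classical
  have key : Nat.card (Quotient (cycleSetoid g)) =
      Nat.card ({c // c ∈ g.cycleFactorsFinset} ⊕ {x : β // x ∉ g.support}) := by
    refine Nat.card_eq_of_bijective
      (fun q => Quotient.liftOn q
        (fun x => if h : x ∈ g.support
          then Sum.inl ⟨g.cycleOf x, (cycleOf_mem_cycleFactorsFinset_iff).mpr h⟩
          else Sum.inr ⟨x, h⟩) ?_) ⟨?_, ?_⟩
    · intro x y (hxy : g.SameCycle x y)
      by_cases hx : x ∈ g.support
      · have hy : y ∈ g.support := hxy.mem_support_iff.mp hx
        simp only [dif_pos hx, dif_pos hy, hxy.cycleOf_eq]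
      · have hy : y ∉ g.support := fun hy => hx (hxy.mem_support_iff.mpr hy)
        have hfix : g x = x := by simpa using hx
        obtain ⟨n, rfl⟩ := hxy
        have : (g ^ n) x = x := by
          apply zpow_apply_eq_self_of_apply_eq_self hfix
        simp only [dif_neg hx, this, dif_neg hx]
    · intro q1 q2
      induction q1 using Quotient.ind with
      | _ x =>
      induction q2 using Quotient.ind with
      | _ y =>
      intro h
      by_cases hx : x ∈ g.support <;> by_cases hy : y ∈ g.support <;>
        simp only [Quotient.liftOn_mk, dif_pos, dif_neg, hx, hy] at h
      · apply Quotient.sound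
        have := Sum.inl.inj h
        have hco : g.cycleOf x = g.cycleOf y := by
          simpa using congrArg Subtype.val this
        show g.SameCycle x y
        have : y ∈ (g.cycleOf x).support := by
          rw [hco]
          exact (mem_support_cycleOf_iff).mpr ⟨SameCycle.refl g y, hy⟩
        exact ((mem_support_cycleOf_iff).mp this).1
      · exact absurd h (by simp)
      · exact absurd h (by simp)
      · have := Sum.inr.inj h
        have : x = y := by simpa using congrArg Subtype.val this
        exact congrArg _ (by rw [this])
    · rintro (⟨c, hc⟩ | ⟨x, hx⟩)
      · have hcyc := (mem_cycleFactorsFinset_iff.mp hc).1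
        obtain ⟨x, hx⟩ := hcyc.nonempty_support
        have hcx : c = g.cycleOf x := cycle_is_cycleOf hx hc
        have hxs : x ∈ g.support := by
          have := (mem_cycleFactorsFinset_iff.mp hc).2 x hx
          rw [mem_support] at hx ⊢
          rwa [this] at hx
        refine ⟨Quotient.mk _ x, ?_⟩
        simp only [Quotient.liftOn_mk, dif_pos hxs]
        congr 1
        exact Subtype.ext hcx.symm
      · exact ⟨Quotient.mk _ x, by simp only [Quotient.liftOn_mk, dif_neg hx]⟩
  rw [key, Nat.card_sum, Nat.card_eq_fintype_card, Nat.card_eq_fintype_card]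
  unfold numCycles
  congr 1
  · rw [Fintype.card_coe, cycleType_def, Multiset.card_map]
    rfl
  · rw [Fintype.card_subtype_compl, Fintype.card_coe]

/-! ### Multiplying by a transposition -/

lemma mul_swap_apply (g : Perm β) (a b x : β) :
    (g * Equiv.swap a b) x = if x = a then g b else if x = b then g a else g x := by
  rw [Perm.mul_apply, Equiv.swap_apply_def]
  split_ifs <;> rfl

lemma rel_pow_of_step (R : β → β → Prop) (hR : Equivalence R) (f : Perm β)
    (hstep : ∀ x, R x (f x)) : ∀ (n : ℕ) (x : β), R x ((f ^ n) x) := by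
  intro n
  induction n with
  | zero => intro x; simpa using hR.refl x
  | succ n ih =>
    intro x
    have : (f ^ (n + 1)) x = (f ^ n) (f x) := by rw [pow_succ]; rfl
    rw [this]
    exact hR.trans (hstep x) (ih (f x))

lemma sameCycle_equivalence (h : Perm β) : Equivalence h.SameCycle :=
  ⟨fun x => SameCycle.refl h x, fun hxy => hxy.symm, fun hxy hyz => hxy.trans hyz⟩

lemma sameCycle_mul_swap_iff {g : Perm β} {a b : β} (hab : a ≠ b)
    (hns : ¬ g.SameCycle a b) (x y : β) :
    (g * Equiv.swap a b).SameCycle x y ↔ mergeRel (cycleSetoid g) a b x y := by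
  set h := g * Equiv.swap a b with hh
  have hha : h a = g b := by rw [hh, mul_swap_apply]; simp
  have hhb : h b = g a := by rw [hh, mul_swap_apply]; simp [hab.symm, hab]
  have hhx : ∀ z, z ≠ a → z ≠ b → h z = g z := by
    intro z h1 h2; rw [hh, mul_swap_apply, if_neg h1, if_neg h2]
  have hEq := mergeRel_equivalence (cycleSetoid g) a b hns
  -- `a` and `b` are in the same cycle of `h`
  have hP : ∃ m, 0 < m ∧ (g ^ m) b = b :=
    ⟨orderOf g, orderOf_pos g, by rw [pow_orderOf_eq_one]; rfl⟩
  set m := Nat.find hP with hmdef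
  obtain ⟨hm0, hmb⟩ := Nat.find_spec hP
  have claim : ∀ j, 1 ≤ j → j ≤ m → (h ^ j) a = (g ^ j) b := by
    intro j
    induction j with
    | zero => intro h1 _; omega
    | succ j ih =>
      intro _ h2
      rcases Nat.eq_zero_or_pos j with rfl | hj
      · simpa using hha
      · have hj' : (h ^ j) a = (g ^ j) b := ih hj (by omega)
        have hne1 : (g ^ j) b ≠ b := fun e => Nat.find_min hP (by omega : j < m) ⟨hj, e⟩
        have hne2 : (g ^ j) b ≠ a := by
          intro e
          exact hns (SameCycle.symm ⟨(j : ℤ), by rw [zpow_natCast]; exact e⟩)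
        have e1 : (h ^ (j + 1)) a = h ((h ^ j) a) := by rw [pow_succ']; rfl
        have e2 : (g ^ (j + 1)) b = g ((g ^ j) b) := by rw [pow_succ']; rfl
        rw [e1, hj', hhx _ hne2 hne1, e2]
  have hsab : h.SameCycle a b := by
    refine ⟨(m : ℤ), ?_⟩
    rw [zpow_natCast, claim m hm0 le_rfl, hmb]
  -- each step of `g` stays in the same `h`-cycle
  have hstep_g : ∀ z, h.SameCycle z (g z) := by
    intro z
    by_cases hza : z = a
    · subst hza
      exact hsab.trans (by rw [← hhb]; exact sameCycle_apply_right.mpr (SameCycle.refl h b))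
    · by_cases hzb : z = b
      · subst hzb
        exact hsab.symm.trans
          (by rw [← hha]; exact sameCycle_apply_right.mpr (SameCycle.refl h a))
      · rw [← hhx z hza hzb]
        exact sameCycle_apply_right.mpr (SameCycle.refl h z)
  have hr2s : ∀ u v : β, g.SameCycle u v → h.SameCycle u v := by
    intro u v huv
    obtain ⟨i, _, hi⟩ := huv.exists_pow_eq'
    rw [← hi]
    exact rel_pow_of_step h.SameCycle (sameCycle_equivalence h) g hstep_g i u
  have hstep_h : ∀ z, mergeRel (cycleSetoid g) a b z (h z) := by
    intro z
    by_cases hza : z = a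
    · rw [hza, hha]
      exact Or.inr (Or.inl ⟨SameCycle.refl g a, sameCycle_apply_left.mpr (SameCycle.refl g b)⟩)
    · by_cases hzb : z = b
      · rw [hzb, hhb]
        exact Or.inr (Or.inr ⟨SameCycle.refl g b, sameCycle_apply_left.mpr (SameCycle.refl g a)⟩)
      · rw [hhx z hza hzb]
        exact Or.inl (sameCycle_apply_right.mpr (SameCycle.refl g z))
  constructor
  · intro hxy
    obtain ⟨i, _, hi⟩ := hxy.exists_pow_eq'
    rw [← hi]
    exact rel_pow_of_step (mergeRel (cycleSetoid g) a b) hEq h hstep_h i x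
  · rintro (hxy | ⟨h1, h2⟩ | ⟨h1, h2⟩)
    · exact hr2s x y hxy
    · exact ((hr2s x a h1).trans hsab).trans (hr2s b y (SameCycle.symm h2))
    · exact ((hr2s x b h1).trans hsab.symm).trans (hr2s a y (SameCycle.symm h2))

lemma numCycles_merge {g : Perm β} {a b : β} (hab : a ≠ b) (hns : ¬ g.SameCycle a b) :
    numCycles g = numCycles (g * Equiv.swap a b) + 1 := by
  rw [numCycles_eq_card_quot, numCycles_eq_card_quot]
  exact card_quot_of_rel_eq_merge (cycleSetoid g) (cycleSetoid (g * Equiv.swap a b)) a b hns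
    (fun x y => sameCycle_mul_swap_iff hab hns x y)

lemma not_sameCycle_mul_swap {g : Perm β} {a b : β} (hab : a ≠ b) (hs : g.SameCycle a b) :
    ¬ (g * Equiv.swap a b).SameCycle a b := by
  set h := g * Equiv.swap a b with hh
  have hha : h a = g b := by rw [hh, mul_swap_apply]; simp
  have hhb : h b = g a := by rw [hh, mul_swap_apply]; simp [hab.symm, hab]
  have hhx : ∀ z, z ≠ a → z ≠ b → h z = g z := by
    intro z h1 h2; rw [hh, mul_swap_apply, if_neg h1, if_neg h2]
  have hP : ∃ j, 0 < j ∧ (g ^ j) a = b := by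
    obtain ⟨i, _, hi⟩ := hs.exists_pow_eq'
    have hi0 : i ≠ 0 := by
      rintro rfl
      exact hab (by simpa using hi)
    exact ⟨i, Nat.pos_of_ne_zero hi0, hi⟩
  set k := Nat.find hP with hkdef
  obtain ⟨hk0, hka⟩ := Nat.find_spec hP
  have hgja : ∀ j, 1 ≤ j → j < k → (g ^ j) a ≠ a ∧ (g ^ j) a ≠ b := by
    intro j h1 h2
    constructor
    · intro e
      have : (g ^ (k - j)) a = b := by
        have : (g ^ (k - j)) ((g ^ j) a) = (g ^ k) a := by
          rw [← Perm.mul_apply, ← pow_add]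
          congr 2
          omega
        rw [e] at this
        rw [this, hka]
      exact Nat.find_min hP (by omega : k - j < k) ⟨by omega, this⟩
    · intro e
      exact Nat.find_min hP h2 ⟨h1, e⟩
  have claim : ∀ j, 1 ≤ j → j ≤ k → (h ^ j) b = (g ^ j) a := by
    intro j
    induction j with
    | zero => intro h1 _; omega
    | succ j ih =>
      intro _ h2
      rcases Nat.eq_zero_or_pos j with rfl | hj
      · simpa using hhb
      · have hj' : (h ^ j) b = (g ^ j) a := ih hj (by omega)
        obtain ⟨hne2, hne1⟩ := hgja j hj (by omega)
        have e1 : (h ^ (j + 1)) b = h ((h ^ j) b) := by rw [pow_succ']; rfl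
        have e2 : (g ^ (j + 1)) a = g ((g ^ j) a) := by rw [pow_succ']; rfl
        rw [e1, hj', hhx _ hne2 hne1, e2]
  have hper : (h ^ k) b = b := by rw [claim k hk0 le_rfl, hka]
  have havoid : ∀ j, j < k → (h ^ j) b ≠ a := by
    intro j hjk
    rcases Nat.eq_zero_or_pos j with rfl | hj
    · simpa using hab.symm
    · rw [claim j hj (by omega)]
      exact (hgja j hj hjk).1
  intro hcon
  obtain ⟨i, _, hi⟩ := (SameCycle.symm hcon).exists_pow_eq'
  have hmul : ∀ q : ℕ, (h ^ (k * q)) b = b := by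
    intro q
    induction q with
    | zero => simp
    | succ q ih =>
      have : (h ^ (k * (q + 1))) b = (h ^ k) ((h ^ (k * q)) b) := by
        rw [← Perm.mul_apply, ← pow_add]
        congr 2
        ring
      rw [this, ih, hper]
  have hred : (h ^ (i % k)) b = a := by
    have hsplit : (h ^ i) b = (h ^ (i % k)) ((h ^ (k * (i / k))) b) := by
      rw [← Perm.mul_apply, ← pow_add]
      congr 2
      exact (Nat.mod_add_div i k).symm
    rw [hsplit, hmul] at hi
    exact hi
  exact havoid (i % k) (Nat.mod_lt _ hk0) hred

lemma numCycles_split {g : Perm β} {a b : β} (hab : a ≠ b) (hs : g.SameCycle a b) :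
    numCycles (g * Equiv.swap a b) = numCycles g + 1 := by
  have hns := not_sameCycle_mul_swap hab hs
  have := numCycles_merge (g := g * Equiv.swap a b) hab hns
  rwa [mul_assoc, Equiv.swap_mul_self, mul_one] at this

lemma numCycles_mul_swap_le {g : Perm β} {a b : β} (hab : a ≠ b) :
    numCycles (g * Equiv.swap a b) ≤ numCycles g + 1 := by
  by_cases hs : g.SameCycle a b
  · exact (numCycles_split hab hs).le
  · have := numCycles_merge hab hs
    omega

/-! ### Orbit setoid of a pair of permutations -/

/-- The orbit setoid of the subgroup generated by two permutations. -/
def orbSetoid (σ τ : Perm β) : Setoid β :=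
  ⟨fun x y => ∃ π ∈ Subgroup.closure {σ, τ}, π x = y, by
    constructor
    · intro x; exact ⟨1, Subgroup.one_mem _, rfl⟩
    · rintro x y ⟨π, hπ, rfl⟩
      exact ⟨π⁻¹, Subgroup.inv_mem _ hπ, by simp⟩
    · rintro x y z ⟨π, hπ, rfl⟩ ⟨ρ, hρ, rfl⟩
      exact ⟨ρ * π, Subgroup.mul_mem _ hρ hπ, rfl⟩⟩

lemma sigma_mem_closure (σ τ : Perm β) : σ ∈ Subgroup.closure {σ, τ} :=
  Subgroup.subset_closure (Set.mem_insert _ _)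

lemma tau_mem_closure (σ τ : Perm β) : τ ∈ Subgroup.closure {σ, τ} :=
  Subgroup.subset_closure (Set.mem_insert_of_mem _ rfl)

lemma orb_rel_of_sameCycle {σ τ π : Perm β} (hπ : π ∈ Subgroup.closure {σ, τ}) {x y : β}
    (h : π.SameCycle x y) : (orbSetoid σ τ).r x y := by
  obtain ⟨n, hn⟩ := h
  exact ⟨π ^ n, Subgroup.zpow_mem _ hπ n, hn⟩

lemma orb_rel_mono (σ τ : Perm β) (R : β → β → Prop) (hR : Equivalence R)
    (hσ : ∀ x, R x (σ x)) (hτ : ∀ x, R x (τ x)) :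
    ∀ x y, (orbSetoid σ τ).r x y → R x y := by
  rintro x y ⟨π, hπ, rfl⟩
  revert x
  refine Subgroup.closure_induction (p := fun π _ => ∀ x, R x (π x)) ?_ ?_ ?_ ?_ hπ
  · rintro π (rfl | rfl)
    · exact hσ
    · exact hτ
  · intro x; simpa using hR.refl x
  · intro f g _ _ hf hg x
    exact hR.trans (hg x) (hf (g x))
  · intro f _ hf x
    exact hR.symm (by simpa using hf (f⁻¹ x))

/-! ### The key inequality -/

lemma key_ineq (σ : Perm β) : ∀ (n : ℕ) (τ : Perm β), τ.support.card = n →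
    numCycles σ + numCycles τ + numCycles (σ * τ) ≤
      Fintype.card β + 2 * Nat.card (Quotient (orbSetoid σ τ)) := by
  intro n
  induction n using Nat.strong_induction_on with
  | _ n ih =>
  intro τ hτn
  by_cases h1 : τ = 1
  · subst h1
    have hτ1 : numCycles (1 : Perm β) = Fintype.card β := by
      unfold numCycles
      simp
    have hcyc : numCycles σ = Nat.card (Quotient (orbSetoid σ 1)) := by
      rw [numCycles_eq_card_quot]
      congr 1
      congr 1
      refine Setoid.ext fun x y => ⟨?_, ?_⟩
      · intro h
        exact orb_rel_of_sameCycle (sigma_mem_closure σ 1) h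
      · intro h
        refine orb_rel_mono σ 1 σ.SameCycle (sameCycle_equivalence σ) ?_ ?_ x y h
        · exact fun x => sameCycle_apply_right.mpr (SameCycle.refl σ x)
        · intro x; simpa using SameCycle.refl σ x
    rw [mul_one, hτ1, ← hcyc]
    omega
  · -- pick a point moved by τ
    have hex : ∃ a, τ a ≠ a := by
      by_contra hcon
      push_neg at hcon
      exact h1 (Equiv.ext hcon)
    obtain ⟨a, ha⟩ := hex
    set b := τ a with hb
    have hab : a ≠ b := fun h => ha h.symm
    set τ' := τ * Equiv.swap a b with hτ'
    have hττ' : τ = τ' * Equiv.swap a b := by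
      rw [hτ', mul_assoc, Equiv.swap_mul_self, mul_one]
    have hτapp : ∀ x, τ x = τ' (Equiv.swap a b x) := by
      intro x
      conv_lhs => rw [hττ']
      rfl
    -- the support shrinks
    have hbsupp : b ∈ τ.support := by
      rw [Perm.mem_support]
      intro h
      exact ha (τ.injective (h.trans hb))
    have hsubset : τ'.support ⊆ τ.support.erase b := by
      intro x hx
      rw [Perm.mem_support] at hx
      have hxb : x ≠ b := by
        rintro rfl
        exact hx (by rw [hτ', Perm.mul_apply, Equiv.swap_apply_right])
      refine Finset.mem_erase.mpr ⟨hxb, Perm.mem_support.mpr ?_⟩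
      by_cases hxa : x = a
      · subst hxa; exact ha
      · intro h
        apply hx
        rw [hτ', Perm.mul_apply, Equiv.swap_apply_of_ne_of_ne hxa hxb, h]
    have hcard : τ'.support.card < n := by
      have h1' : τ'.support.card ≤ (τ.support.erase b).card := Finset.card_le_card hsubset
      have h2' : (τ.support.erase b).card < τ.support.card := Finset.card_erase_lt_of_mem hbsupp
      omega
    have IH := ih τ'.support.card hcard τ' rfl
    -- τ' has one more cycle than τ
    have hsc : τ.SameCycle a b := ⟨1, by simp [hb]⟩
    have hτ'c : numCycles τ' = numCycles τ + 1 := numCycles_split hab hsc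
    have hστ : σ * τ = (σ * τ') * Equiv.swap a b := by
      rw [hττ', ← mul_assoc]
    by_cases hcase : (orbSetoid σ τ').r a b
    · -- `a` and `b` are in the same orbit of ⟨σ, τ'⟩
      have hmono : ∀ x y, (orbSetoid σ τ).r x y → (orbSetoid σ τ').r x y := by
        refine orb_rel_mono σ τ (orbSetoid σ τ').r (orbSetoid σ τ').iseqv ?_ ?_
        · exact fun x => ⟨σ, sigma_mem_closure σ τ', rfl⟩
        · intro x
          rw [hτapp x]
          by_cases hxa : x = a
          · rw [hxa, Equiv.swap_apply_left]
            exact (orbSetoid σ τ').trans hcase ⟨τ', tau_mem_closure σ τ', rfl⟩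
          · by_cases hxb : x = b
            · rw [hxb, Equiv.swap_apply_right]
              exact (orbSetoid σ τ').trans ((orbSetoid σ τ').symm hcase)
                ⟨τ', tau_mem_closure σ τ', rfl⟩
            · rw [Equiv.swap_apply_of_ne_of_ne hxa hxb]
              exact ⟨τ', tau_mem_closure σ τ', rfl⟩
      have hcle : Nat.card (Quotient (orbSetoid σ τ')) ≤ Nat.card (Quotient (orbSetoid σ τ)) :=
        card_quot_le_of_le hmono
      have hle : numCycles (σ * τ) ≤ numCycles (σ * τ') + 1 := by
        rw [hστ]
        exact numCycles_mul_swap_le hab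
      omega
    · -- `a` and `b` are in different orbits of ⟨σ, τ'⟩
      have hnsc : ¬ (σ * τ').SameCycle a b := fun h =>
        hcase (orb_rel_of_sameCycle
          (Subgroup.mul_mem _ (sigma_mem_closure σ τ') (tau_mem_closure σ τ')) h)
      have hmerge : numCycles (σ * τ') = numCycles (σ * τ) + 1 := by
        rw [hστ]
        exact numCycles_merge hab hnsc
      -- orbit count comparison
      have hmono : ∀ x y, (orbSetoid σ τ).r x y → mergeRel (orbSetoid σ τ') a b x y := by
        refine orb_rel_mono σ τ (mergeRel (orbSetoid σ τ') a b)
          (mergeRel_equivalence _ a b hcase) ?_ ?_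
        · exact fun x => Or.inl ⟨σ, sigma_mem_closure σ τ', rfl⟩
        · intro x
          rw [hτapp x]
          by_cases hxa : x = a
          · rw [hxa, Equiv.swap_apply_left]
            exact Or.inr (Or.inl ⟨(orbSetoid σ τ').refl a,
              (orbSetoid σ τ').symm ⟨τ', tau_mem_closure σ τ', rfl⟩⟩)
          · by_cases hxb : x = b
            · rw [hxb, Equiv.swap_apply_right]
              exact Or.inr (Or.inr ⟨(orbSetoid σ τ').refl b,
                (orbSetoid σ τ').symm ⟨τ', tau_mem_closure σ τ', rfl⟩⟩)
            · rw [Equiv.swap_apply_of_ne_of_ne hxa hxb]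
              exact Or.inl ⟨τ', tau_mem_closure σ τ', rfl⟩
      have hc1 : Nat.card (Quotient (mergeSetoid (orbSetoid σ τ') a b hcase)) ≤
          Nat.card (Quotient (orbSetoid σ τ)) :=
        card_quot_le_of_le hmono
      have hc2 : Nat.card (Quotient (orbSetoid σ τ')) =
          Nat.card (Quotient (mergeSetoid (orbSetoid σ τ') a b hcase)) + 1 :=
        card_quot_merge _ a b hcase
      omega

/-! ### Sign and parity -/

lemma neg_one_pow_congr {a b : ℕ} (h : a % 2 = b % 2) : ((-1 : ℤˣ)) ^ a = (-1) ^ b := by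
  rw [← Nat.div_add_mod a 2, ← Nat.div_add_mod b 2, pow_add, pow_add, pow_mul, pow_mul, h]
  norm_num

lemma parity_of_neg_one_pow_eq {x y : ℕ} (h : ((-1 : ℤˣ)) ^ x = (-1) ^ y) : x % 2 = y % 2 := by
  rcases Nat.even_or_odd x with hx | hx <;> rcases Nat.even_or_odd y with hy | hy
  · rw [Nat.even_iff] at hx hy; omega
  · rw [hx.neg_one_pow, hy.neg_one_pow] at h
    exact absurd h (by decide)
  · rw [hx.neg_one_pow, hy.neg_one_pow] at h
    exact absurd h (by decide)
  · rw [Nat.odd_iff] at hx hy; omega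

lemma sign_eq_pow (g : Perm β) :
    Perm.sign g = (-1 : ℤˣ) ^ (Fintype.card β + numCycles g) := by
  rw [sign_of_cycleType]
  apply neg_one_pow_congr
  have hsum := g.sum_cycleType
  have hle : g.support.card ≤ Fintype.card β := Finset.card_le_univ _
  unfold numCycles
  omega

/-! ### The permutation attached to a pair partition -/

lemma classFinset_card_two {α : Setoid β} (hpair : IsPairPartition α) (i : β) :
    (classFinset α i).card = 2 := by
  classical
  have h : (classFinset α i) = {j | α.r i j}.toFinset := by
    ext x; simp [mem_classFinset]
  rw [h, ← Set.ncard_eq_toFinset_card']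
  exact hpair i

lemma partitionToPerm_apply (α : Setoid β) (i : β) :
    partitionToPerm α i = ((classFinset α i).sort (· ≤ ·)).formPerm i := rfl

lemma partitionToPerm_rel (α : Setoid β) (i : β) : α.r i (partitionToPerm α i) := by
  rw [partitionToPerm_apply]
  have hmem : i ∈ (classFinset α i).sort (· ≤ ·) :=
    (Finset.mem_sort _).mpr (self_mem_classFinset α i)
  have := List.formPerm_apply_mem_of_mem hmem
  exact mem_classFinset.mp ((Finset.mem_sort _).mp this)

lemma partitionToPerm_ne {α : Setoid β} (hpair : IsPairPartition α) (i : β) :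
    partitionToPerm α i ≠ i := by
  rw [partitionToPerm_apply]
  have hmem : i ∈ (classFinset α i).sort (· ≤ ·) :=
    (Finset.mem_sort _).mpr (self_mem_classFinset α i)
  refine (List.formPerm_apply_mem_ne_self_iff _ (Finset.sort_nodup _ _) i hmem).mpr ?_
  rw [Finset.length_sort, classFinset_card_two hpair]

lemma partitionToPerm_invol {α : Setoid β} (hpair : IsPairPartition α) (i : β) :
    partitionToPerm α (partitionToPerm α i) = i := by
  set j := partitionToPerm α i with hj
  have hij : α.r i j := partitionToPerm_rel α i
  have hne : j ≠ i := partitionToPerm_ne hpair i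
  have hcc : classFinset α j = classFinset α i := (classFinset_eq_of_rel hij).symm
  have hPj_mem : partitionToPerm α j ∈ classFinset α i := by
    rw [← hcc]
    exact mem_classFinset.mpr (partitionToPerm_rel α j)
  have hPj_ne : partitionToPerm α j ≠ j := partitionToPerm_ne hpair j
  -- the class of i is exactly {i, j}
  have hsub : ({i, j} : Finset β) ⊆ classFinset α i := by
    intro x hx
    rcases Finset.mem_insert.mp hx with rfl | hx
    · exact self_mem_classFinset α _
    · rw [Finset.mem_singleton] at hx
      subst hx
      exact mem_classFinset.mpr hij
  have hcard : ({i, j} : Finset β).card = 2 := by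
    rw [Finset.card_insert_of_notMem (by simpa using hne.symm), Finset.card_singleton]
  have heq : classFinset α i = ({i, j} : Finset β) :=
    (Finset.eq_of_subset_of_card_le hsub (by rw [hcard, classFinset_card_two hpair])).symm
  rw [heq] at hPj_mem
  rcases Finset.mem_insert.mp hPj_mem with h | h
  · exact h
  · rw [Finset.mem_singleton] at h
    exact absurd h hPj_ne

lemma two_mul_numCycles_pairPerm {α : Setoid β} (hpair : IsPairPartition α) :
    2 * numCycles (partitionToPerm α) = Fintype.card β := by
  set P := partitionToPerm α with hP
  have hsupp : P.support = Finset.univ := by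
    ext i
    simp only [Perm.mem_support, Finset.mem_univ, iff_true]
    exact partitionToPerm_ne hpair i
  have hsq : P * P = 1 := by
    ext i
    simp only [Perm.mul_apply, Perm.one_apply]
    exact partitionToPerm_invol hpair i
  have horder : orderOf P ∣ 2 := orderOf_dvd_of_pow_eq_one (by rw [pow_two]; exact hsq)
  have hctwo : ∀ c ∈ P.cycleType, c = 2 := by
    intro c hc
    have h1 : c ∣ orderOf P := by
      rw [← lcm_cycleType]
      exact Multiset.dvd_lcm hc
    have h2 : c ∣ 2 := h1.trans horder
    have h3 : 2 ≤ c := two_le_of_mem_cycleType hc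
    have h4 : c ≤ 2 := Nat.le_of_dvd (by norm_num) h2
    omega
  have hrep : P.cycleType = Multiset.replicate (Multiset.card P.cycleType) 2 :=
    Multiset.eq_replicate.mpr ⟨rfl, hctwo⟩
  have hsum : P.cycleType.sum = Fintype.card β := by
    rw [P.sum_cycleType, hsupp, Finset.card_univ]
  rw [hrep, Multiset.sum_replicate, smul_eq_mul] at hsum
  unfold numCycles
  rw [hsupp, Finset.card_univ]
  omega

/-! ### The permutation γ -/

lemma fullCycleOn_support_subset (J : Finset β) : (fullCycleOn J).support ⊆ J := by
  intro x hx
  rw [Perm.mem_support] at hx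
  by_contra hxJ
  exact hx (List.formPerm_apply_of_notMem (by simpa using hxJ))

lemma fullCycleOn_count (J : Finset β) (hJ : J.Nonempty) :
    Multiset.card (fullCycleOn J).cycleType + (J.card - (fullCycleOn J).support.card) = 1 ∧
    (fullCycleOn J).support.card ≤ J.card := by
  have hlen : (J.sort (· ≤ ·)).length = J.card := Finset.length_sort _
  rcases Nat.lt_or_ge J.card 2 with hcard | hcard
  · have hone : J.card = 1 := by
      have := Finset.card_pos.mpr hJ
      omega
    obtain ⟨x, hx⟩ := Finset.card_eq_one.mp hone
    have : fullCycleOn J = 1 := by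
      unfold fullCycleOn
      rw [hx, Finset.sort_singleton]
      exact List.formPerm_singleton x
    rw [this]
    simp [hone]
  · have hnodup := Finset.sort_nodup (s := J) (r := (· ≤ ·))
    have hne : ∀ x : β, J.sort (· ≤ ·) ≠ [x] := by
      intro x hx
      rw [hx] at hlen
      simp at hlen
      omega
    have hcyc : (fullCycleOn J).IsCycle :=
      List.isCycle_formPerm hnodup (by rw [hlen]; exact hcard)
    have hsupp : (fullCycleOn J).support = J := by
      unfold fullCycleOn
      rw [List.support_formPerm_of_nodup _ hnodup hne, Finset.sort_toFinset]
    rw [hcyc.cycleType, hsupp]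
    simp

lemma numCycles_two_blocks (A B : Finset β) (hAB : Disjoint A B) (hunion : A ∪ B = Finset.univ)
    (hAne : A.Nonempty) (hBne : B.Nonempty) :
    numCycles (fullCycleOn A * fullCycleOn B) = 2 := by
  have hdisjsupp : Disjoint (fullCycleOn A).support (fullCycleOn B).support :=
    Finset.disjoint_of_subset_left (fullCycleOn_support_subset A)
      (Finset.disjoint_of_subset_right (fullCycleOn_support_subset B) hAB)
  have hdisj : Perm.Disjoint (fullCycleOn A) (fullCycleOn B) :=
    Perm.disjoint_iff_disjoint_support.mpr hdisjsupp
  have hct : (fullCycleOn A * fullCycleOn B).cycleType =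
      (fullCycleOn A).cycleType + (fullCycleOn B).cycleType := Perm.Disjoint.cycleType_mul hdisj
  have hsup : (fullCycleOn A * fullCycleOn B).support =
      (fullCycleOn A).support ∪ (fullCycleOn B).support := hdisj.support_mul
  have hsupcard : (fullCycleOn A * fullCycleOn B).support.card =
      (fullCycleOn A).support.card + (fullCycleOn B).support.card := by
    rw [hsup]
    exact Finset.card_union_of_disjoint hdisjsupp
  have hcardsum : A.card + B.card = Fintype.card β := by
    rw [← Finset.card_union_of_disjoint hAB, hunion, Finset.card_univ]
  obtain ⟨hA1, hA2⟩ := fullCycleOn_count A hAne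
  obtain ⟨hB1, hB2⟩ := fullCycleOn_count B hBne
  unfold numCycles
  rw [hct, Multiset.card_add, hsupcard]
  omega

lemma numCycles_gamma (p q : ℕ) (hp : 1 ≤ p) (hq : 1 ≤ q) :
    numCycles (gammaPQ p q) = 2 := by
  refine numCycles_two_blocks _ _ ?_ ?_ ?_ ?_
  · rw [Finset.disjoint_left]
    intro x hx hx'
    rw [Finset.mem_filter] at hx hx'
    omega
  · ext x
    simp only [Finset.mem_union, Finset.mem_filter, Finset.mem_univ, true_and, iff_true]
    omega
  · refine ⟨⟨0, by omega⟩, ?_⟩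
    simp only [Finset.mem_filter, Finset.mem_univ, true_and]
    simpa using (show 0 < p by omega)
  · refine ⟨⟨p, by omega⟩, ?_⟩
    simp only [Finset.mem_filter, Finset.mem_univ, true_and]
    simp

lemma key_ineq' (σ τ : Perm β) :
    numCycles σ + numCycles τ + numCycles (σ * τ) ≤
      Fintype.card β + 2 * Nat.card (Quotient (orbSetoid σ τ)) :=
  key_ineq σ τ.support.card τ rfl

lemma parity_lemma (σ τ : Perm β) :
    (Fintype.card β + numCycles (σ * τ)) % 2 =
      (Fintype.card β + numCycles σ + (Fintype.card β + numCycles τ)) % 2 := by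
  apply parity_of_neg_one_pow_eq
  calc ((-1 : ℤˣ)) ^ (Fintype.card β + numCycles (σ * τ))
      = Perm.sign (σ * τ) := (sign_eq_pow _).symm
    _ = Perm.sign σ * Perm.sign τ := Perm.sign_mul σ τ
    _ = (-1 : ℤˣ) ^ (Fintype.card β + numCycles σ + (Fintype.card β + numCycles τ)) := by
        rw [sign_eq_pow σ, sign_eq_pow τ, ← pow_add]

end Stmt5Aux

open LRH in
/-- For a connected pair partition α of `{1,…,p+q}` (relative to
`γ_{p,q}`), the number of cycles of `P_α·γ_{p,q}` equals `(p+q)/2 − 2g` for some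
integer `g ≥ 0`; in particular it is at most `(p+q)/2`. -/
theorem statement5 (p q : ℕ) (hp : 1 ≤ p) (hq : 1 ≤ q) (hpq : Even (p + q))
    (α : Setoid (Fin (p + q))) (hpair : IsPairPartition α)
    (hconn : ∀ x y : Fin (p + q),
      ∃ π ∈ Subgroup.closure {partitionToPerm α, gammaPQ p q}, π x = y) :
    (∃ g : ℕ, numCycles (partitionToPerm α * gammaPQ p q) + 2 * g = (p + q) / 2) ∧
    numCycles (partitionToPerm α * gammaPQ p q) ≤ (p + q) / 2 := by
  classical
  have hγ : numCycles (gammaPQ p q) = 2 := Stmt5Aux.numCycles_gamma p q hp hq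
  have hP2 : 2 * numCycles (partitionToPerm α) = p + q := by
    have := Stmt5Aux.two_mul_numCycles_pairPerm hpair
    rwa [Fintype.card_fin] at this
  have horb : Nat.card (Quotient (Stmt5Aux.orbSetoid (partitionToPerm α) (gammaPQ p q))) = 1 := by
    rw [Nat.card_eq_one_iff_unique]
    constructor
    · constructor
      intro x y
      induction x using Quotient.ind with
      | _ x =>
      induction y using Quotient.ind with
      | _ y =>
      exact Quotient.sound (hconn x y)
    · exact ⟨Quotient.mk _ ⟨0, by omega⟩⟩
  have hkey := Stmt5Aux.key_ineq' (partitionToPerm α) (gammaPQ p q)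
  rw [horb, Fintype.card_fin] at hkey
  have hpar := Stmt5Aux.parity_lemma (partitionToPerm α) (gammaPQ p q)
  rw [Fintype.card_fin] at hpar
  obtain ⟨k, hk⟩ := hpq
  constructor
  · exact ⟨((p + q) / 2 - numCycles (partitionToPerm α * gammaPQ p q)) / 2, by omega⟩
  · omega
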